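/- Let M, η, q, γ, g, J, t > 0, set r = M + γ, V = (J/2)·√(γ/(η M))·e^{−r t/2}, and z = √( qγ/g² + (1/(g J))·√(q³/(M η))·e^{r t/2} ). Then there exist real numbers x and y such that the following three equations hold simultaneously: −8 M η V x − 4 M η x² − 2 g J e^{−r t/2} y = 0; −4 M η V y − 4 M η x y − g J e^{−r t/2} z = 0; and q − 4 M η y² = 0. -/

import Mathlib

/-- **Steady state of the Kalman filter for a Wiener-process field.** With
`r = M + γ`, `V = (J/2)√(γ/(ηM)) e^{−rt/2}` and
`z = √(qγ/g² + (1/(gJ))√(q³/(Mη)) e^{rt/2})`, there exist `x, y` solving the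
continuous-time algebraic Riccati system obtained by setting the time derivative
of the Kalman covariance matrix to zero. -/
theorem kalman_steady_state_algebraic_riccati
    (M η q γ g J t : ℝ)
    (hM : 0 < M) (hη : 0 < η) (hq : 0 < q) (hγ : 0 < γ) (hg : 0 < g) (hJ : 0 < J) (ht : 0 < t)
    (r V z : ℝ) (hr : r = M + γ)
    (hV : V = (J / 2) * Real.sqrt (γ / (η * M)) * Real.exp (-r * t / 2))
    (hz : z = Real.sqrt (q * γ / g ^ 2 +
      (1 / (g * J)) * Real.sqrt (q ^ 3 / (M * η)) * Real.exp (r * t / 2))) :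
    ∃ x y : ℝ,
      -8 * M * η * V * x - 4 * M * η * x ^ 2 - 2 * g * J * Real.exp (-r * t / 2) * y = 0 ∧
      -4 * M * η * V * y - 4 * M * η * x * y - g * J * Real.exp (-r * t / 2) * z = 0 ∧
      q - 4 * M * η * y ^ 2 = 0 := by
  set E := Real.exp (-r * t / 2) with hE
  set F := Real.exp (r * t / 2) with hF
  have hEF : E * F = 1 := by
    rw [hE, hF, ← Real.exp_add]
    rw [show -r * t / 2 + r * t / 2 = 0 by ring, Real.exp_zero]
  have hEpos : 0 < E := Real.exp_pos _
  set s1 := Real.sqrt (γ / (η * M)) with hs1def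
  set s2 := Real.sqrt (q / (M * η)) with hs2def
  have hs1 : s1 ^ 2 = γ / (η * M) := Real.sq_sqrt (by positivity)
  have hs2 : s2 ^ 2 = q / (M * η) := Real.sq_sqrt (by positivity)
  have hs2pos : 0 < s2 := Real.sqrt_pos.mpr (by positivity)
  have hs3 : Real.sqrt (q ^ 3 / (M * η)) = q * s2 := by
    rw [hs2def, show q ^ 3 / (M * η) = q ^ 2 * (q / (M * η)) by ring,
      Real.sqrt_mul (by positivity), Real.sqrt_sq hq.le]
  have hz2 : z ^ 2 = q * γ / g ^ 2 + (1 / (g * J)) * (q * s2) * F := by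
    rw [hz, hs3, Real.sq_sqrt]
    positivity
  have hs2' : s2 ^ 2 * (M * η) = q := by rw [hs2]; field_simp
  have hVsq : 4 * M * η * V ^ 2 = γ * J ^ 2 * E ^ 2 := by
    rw [hV]
    have hs1' : s1 ^ 2 * (η * M) = γ := by rw [hs1]; field_simp
    linear_combination (J ^ 2 * E ^ 2) * hs1'
  have hz2' : g ^ 2 * J ^ 2 * z ^ 2 = q * γ * J ^ 2 + g * J * q * s2 * F := by
    have hg0 : (g:ℝ) ≠ 0 := hg.ne'
    have hgJ : g * J ≠ 0 := by positivity
    field_simp at hz2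
    apply mul_left_cancel₀ hg0
    linear_combination (g * J) * hz2
  refine ⟨-V + g * J * E * z / (2 * M * η * s2), -s2 / 2, ?_, ?_, ?_⟩
  · field_simp
    linear_combination (4*M*η*s2^2) * hVsq - (4*E^2) * hz2'
      + (4*(γ*J^2*E^2 + g*J*E*s2)) * hs2'
      - (4*g*J*q*s2*E) * hEF
  · field_simp
    ring
  · field_simp
    linear_combination -4 * hs2'
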